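/- Let $G$ be a countable group, $\nu$ a probability measure on $G$ with full support, $(X_n)_{n \geq 1}$ an i.i.d. sequence with law $\nu$, and $Z_n = X_1 \cdots X_n$ the associated random walk. Suppose there are subsets $W_i, W_i' \subseteq G$ for $i \in \mathbb{N}$ with $W_i' \subseteq W_i$ and $W_i \cap W_j = \varnothing$ for $i \neq j$; define $\mathrm{rank}(g) = i$ if $g \in W_i$ and $\mathrm{rank}(g) = 0$ if $g \notin \bigcup_i W_i$; and suppose there is a function $p : \bigcup_i W_i \to G$ such that: (1) $\mathrm{rank}(p(g)) < \mathrm{rank}(g)$ whenever $p(g)$ is defined; (2) for every $h \in G$ there is $N$ such that for all $i > N$ and all $w \in W_i'$ one has $hw \in W_i$ and $p(hw) = h\, p(w)$; (3) almost surely there is $i_0$ such that for all $i > i_0$ there is $j$ with $Z_i \in W_j'$; (4) almost surely there is $i_0$ such that for all $i > i_0$ either $p(Z_{i+1}) = p(Z_i)$ or $p(Z_{i+1}) = Z_i$; (5) almost surely the sequence $\mathrm{rank}(Z_i)$ is unbounded. Then the tail $\sigma$-algebra of the process $(Z_n)$ is nontrivial: there exists a tail-measurable event whose probability is strictly between $0$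 and $1$. -/

import Mathlib

open MeasureTheory ProbabilityTheory Filter

namespace TailAux

variable {Ω G : Type*}

/-! ### The truncated-ancestor map `df` -/

/-- Fueled iteration of the parent map `p` until the rank drops to `≤ ρ`. -/
def ddf (rank : G → ℕ) (p : G → G) (ρ : ℕ) : ℕ → G → G
  | 0, g => g
  | f + 1, g => if rank g ≤ ρ then g else ddf rank p ρ f (p g)

/-- The first element of the `p`-chain of `g` whose rank is `≤ ρ`. -/
def df (rank : G → ℕ) (p : G → G) (ρ : ℕ) (g : G) : G :=
  ddf rank p ρ (rank g) g

variable {rank : G → ℕ} {p : G → G}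

lemma ddf_of_le {ρ : ℕ} {g : G} (h : rank g ≤ ρ) : ∀ f, ddf rank p ρ f g = g
  | 0 => rfl
  | f + 1 => by simp [ddf, h]

lemma ddf_eq_df (hdec : ∀ g : G, 1 ≤ rank g → rank (p g) < rank g) {ρ : ℕ} :
    ∀ f (g : G), rank g ≤ f → ddf rank p ρ f g = df rank p ρ g
  | 0, g, h => by
      have h0 : rank g = 0 := Nat.le_zero.mp h
      simp [df, h0, ddf]
  | f + 1, g, h => by
      by_cases hle : rank g ≤ ρ
      · rw [ddf_of_le hle, df, ddf_of_le hle]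
      · have h1 : 1 ≤ rank g := by omega
        have hpg : rank (p g) < rank g := hdec g h1
        obtain ⟨k, hk⟩ := Nat.exists_eq_succ_of_ne_zero (by omega : rank g ≠ 0)
        have lhs : ddf rank p ρ (f + 1) g = ddf rank p ρ f (p g) := by
          simp [ddf, hle]
        have rhs : df rank p ρ g = ddf rank p ρ k (p g) := by
          rw [df, hk]; simp [ddf, hle]
        rw [lhs, rhs, ddf_eq_df hdec f (p g) (by omega), ddf_eq_df hdec k (p g) (by omega)]

lemma df_of_le {ρ : ℕ} {g : G} (h : rank g ≤ ρ) : df rank p ρ g = g :=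
  ddf_of_le h _

lemma df_of_lt (hdec : ∀ g : G, 1 ≤ rank g → rank (p g) < rank g) {ρ : ℕ} {g : G}
    (h : ρ < rank g) : df rank p ρ g = df rank p ρ (p g) := by
  have h1 : 1 ≤ rank g := by omega
  have hpg : rank (p g) < rank g := hdec g h1
  obtain ⟨k, hk⟩ := Nat.exists_eq_succ_of_ne_zero (by omega : rank g ≠ 0)
  have : df rank p ρ g = ddf rank p ρ k (p g) := by
    rw [df, hk]; simp [ddf, not_le.mpr h]
  rw [this, ddf_eq_df hdec k (p g) (by omega)]

/-! ### Combinatorial lemmas about "case-2 times" of a sequence -/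

section Comb

variable {y : ℕ → G} {T : ℕ}
  (ha : ∀ m, T ≤ m → 1 ≤ rank (y m) ∧ rank (p (y m)) < rank (y m))
  (hb : ∀ m, T ≤ m → p (y (m + 1)) = p (y m) ∨ p (y (m + 1)) = y m)

include hb in
lemma chain_eq {m m' : ℕ} (hm : T ≤ m) (hc : p (y (m + 1)) = y m) (hlt : m < m')
    (hno : ∀ j, m < j → j < m' → p (y (j + 1)) ≠ y j) : p (y m') = y m := by
  have key : ∀ m'', m + 1 ≤ m'' → (∀ j, m < j → j < m'' → p (y (j + 1)) ≠ y j) →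
      p (y m'') = y m := by
    intro m'' hm''
    induction m'', hm'' using Nat.le_induction with
    | base => exact fun _ => hc
    | succ n hn ih =>
        intro hno
        have hpm' : p (y n) = y m := ih (fun j hj hj' => hno j hj (by omega))
        have hnc : p (y (n + 1)) ≠ y n := hno n (by omega) (by omega)
        rcases hb n (by omega) with h' | h'
        · rw [h', hpm']
        · exact absurd h' hnc
  exact key m' hlt hno

include ha hb in
lemma rank_lt_of_consec {m m' : ℕ} (hm : T ≤ m) (hc : p (y (m + 1)) = y m) (hlt : m < m')
    (hno : ∀ j, m < j → j < m' → p (y (j + 1)) ≠ y j) : rank (y m) < rank (y m') := by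
  have h := chain_eq hb hm hc hlt hno
  have h2 := (ha m' (le_trans hm (Nat.le_of_lt hlt))).2
  rw [h] at h2
  exact h2

include ha hb in
/-- ranks strictly increase along case-2 times. -/
lemma rank_lt_of_case2 : ∀ m' m, T ≤ m → m < m' → p (y (m + 1)) = y m →
    p (y (m' + 1)) = y m' → rank (y m) < rank (y m') := by
  intro m'
  induction m' using Nat.strong_induction_on with
  | _ m' ih =>
    intro m hm hlt hc hc'
    by_cases hex : ∃ j, (m < j ∧ p (y (j + 1)) = y j) ∧ j < m'
    · classical
      obtain ⟨j, hj1, hj2⟩ := hex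
      set P := fun j => m < j ∧ p (y (j + 1)) = y j with hP
      have hjle : j ≤ m' - 1 := by omega
      have hPg : P (Nat.findGreatest P (m' - 1)) := Nat.findGreatest_spec hjle hj1
      set k := Nat.findGreatest P (m' - 1) with hk
      have hkle : k ≤ m' - 1 := Nat.findGreatest_le _
      have hno : ∀ i, k < i → i < m' → p (y (i + 1)) ≠ y i := by
        intro i hi hi' hci
        exact absurd ⟨by omega, hci⟩ (Nat.findGreatest_is_greatest hi (by omega))
      have h1 : rank (y m) < rank (y k) := ih k (by omega) m hm hPg.1 hc hPg.2
      have h2 : rank (y k) < rank (y m') :=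
        rank_lt_of_consec ha hb (by omega) hPg.2 (by omega) hno
      omega
    · push_neg at hex
      exact rank_lt_of_consec ha hb hm hc hlt
        (fun j hj hj' hcj => absurd (hex j ⟨hj, hcj⟩) (by omega))

include ha hb in
/-- ranks at case-2 times are unbounded. -/
lemma case2_rank_unbounded (hinf : ∀ n, ∃ m, n ≤ m ∧ p (y (m + 1)) = y m) :
    ∀ C, ∃ m, T ≤ m ∧ p (y (m + 1)) = y m ∧ C < rank (y m) := by
  intro C
  induction C with
  | zero =>
      obtain ⟨m, hm, hc⟩ := hinf T
      exact ⟨m, hm, hc, (ha m hm).1⟩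
  | succ C ihC =>
      obtain ⟨m, hm, hc, hC⟩ := ihC
      obtain ⟨m', hm', hc'⟩ := hinf (m + 1)
      have := rank_lt_of_case2 ha hb m' m hm (by omega) hc hc'
      exact ⟨m', by omega, hc', by omega⟩

include ha hb in
/-- the `df ρ` value along the walk eventually stabilizes (on times of rank `> ρ`). -/
lemma df_stabilizes (hdec : ∀ g : G, 1 ≤ rank g → rank (p g) < rank g) (ρ : ℕ) :
    ∃ w n, ∀ m, n ≤ m → ρ < rank (y m) → df rank p ρ (y m) = w := by
  by_cases hinf : ∀ n, ∃ m, n ≤ m ∧ p (y (m + 1)) = y m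
  · obtain ⟨m₁, hm₁T, hm₁c, hm₁ρ⟩ := case2_rank_unbounded ha hb hinf ρ
    refine ⟨df rank p ρ (y m₁), m₁ + 1, ?_⟩
    have key : ∀ m, m₁ + 1 ≤ m → df rank p ρ (p (y m)) = df rank p ρ (y m₁) := by
      intro m hm
      induction m, hm using Nat.le_induction with
      | base => rw [hm₁c]
      | succ n hn ih =>
          rcases hb n (by omega) with h' | h'
          · rw [h', ih]
          · have hrk : ρ < rank (y n) := by
              rcases Nat.lt_or_ge m₁ n with h | h
              · have := rank_lt_of_case2 ha hb n m₁ hm₁T h hm₁c h'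
                omega
              · have : n = m₁ := by omega
                rw [this]; exact hm₁ρ
            rw [h', df_of_lt hdec hrk, ih]
    intro m hm hρ
    rw [df_of_lt hdec hρ, key m hm]
  · push_neg at hinf
    obtain ⟨n₀, hn₀⟩ := hinf
    set n₁ := max n₀ T with hn₁
    have hconst : ∀ m, n₁ ≤ m → p (y m) = p (y n₁) := by
      intro m hm
      induction m, hm using Nat.le_induction with
      | base => rfl
      | succ n hn ih =>
          rcases hb n (by omega) with h' | h'
          · rw [h', ih]
          · exact absurd h' (hn₀ n (by omega))
    refine ⟨df rank p ρ (p (y n₁)), n₁, fun m hm hρ => ?_⟩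
    rw [df_of_lt hdec hρ, hconst m hm]

end Comb

/-! ### The two endgames -/

section Endgame

variable [Group G] {W W' : ℕ → Set G}
  (hsub : ∀ i, W' i ⊆ W i)
  (hrank : ∀ i, 1 ≤ i → ∀ g ∈ W i, rank g = i)
  (h1 : ∀ i, 1 ≤ i → ∀ g ∈ W i, rank (p g) < rank g)

include hsub hrank h1 in
lemma endgameR (hdec : ∀ g : G, 1 ≤ rank g → rank (p g) < rank g)
    {h : G} (hne : h ≠ 1) {N : ℕ}
    (hN : ∀ i, N < i → ∀ w ∈ W' i, h * w ∈ W i ∧ p (h * w) = h * p w)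
    (y v : ℕ → G) (T : ℕ)
    (haW : ∀ m, T ≤ m → ∃ j, 1 ≤ j ∧ y m ∈ W' j)
    (hb : ∀ m, T ≤ m → p (y (m + 1)) = p (y m) ∨ p (y (m + 1)) = y m)
    (hinf : ∀ n, ∃ m, n ≤ m ∧ p (y (m + 1)) = y m)
    (hKe : ∀ ρ, ∃ n, ∀ m, n ≤ m → ρ < rank (y m) → df rank p ρ (y m) = v ρ)
    (hKh : ∀ ρ, ∃ n, ∀ m, n ≤ m → ρ < rank (h * y m) → df rank p ρ (h * y m) = v ρ) :
    False := by
  classical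
  have ha : ∀ m, T ≤ m → 1 ≤ rank (y m) ∧ rank (p (y m)) < rank (y m) := by
    intro m hm
    obtain ⟨j, hj, hmem⟩ := haW m hm
    have hr : rank (y m) = j := hrank j hj _ (hsub j hmem)
    exact ⟨by omega, by rw [hr]; have := h1 j hj _ (hsub j hmem); rw [hr] at this; exact this⟩
  obtain ⟨m₁, hm₁T, hm₁c, hm₁N⟩ := case2_rank_unbounded ha hb hinf N
  set σ := rank (y m₁) with hσ
  have hσ1 : 1 ≤ σ := (ha m₁ hm₁T).1
  -- the key invariant along case-2 times
  have D : ∀ m', m₁ ≤ m' → p (y (m' + 1)) = y m' →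
      σ ≤ rank (y m') ∧ rank (h * y m') = rank (y m') ∧
      df rank p σ (y m') = y m₁ ∧ df rank p σ (h * y m') = h * y m₁ := by
    intro m'
    induction m' using Nat.strong_induction_on with
    | _ m' ih =>
      intro hm' hc'
      have base : σ ≤ rank (y m₁) ∧ rank (h * y m₁) = rank (y m₁) ∧
          df rank p σ (y m₁) = y m₁ ∧ df rank p σ (h * y m₁) = h * y m₁ := by
        obtain ⟨j, hj, hmem⟩ := haW m₁ hm₁T
        have hr : rank (y m₁) = j := hrank j hj _ (hsub j hmem)
        have hjN : N < j := by rw [← hr]; exact hm₁N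
        obtain ⟨hW, hpeq⟩ := hN j hjN _ hmem
        have hrh : rank (h * y m₁) = j := hrank j hj _ hW
        refine ⟨le_rfl, by rw [hrh, hr], df_of_le le_rfl, ?_⟩
        exact df_of_le (by rw [hrh, ← hr])
      rcases eq_or_lt_of_le hm' with heq | hlt
      · exact heq ▸ base
      · -- inductive step: find the previous case-2 time k ∈ [m₁, m')
        set P : ℕ → Prop := fun j => m₁ ≤ j ∧ p (y (j + 1)) = y j with hP
        have hm₁le : m₁ ≤ m' - 1 := by omega
        have hPg : P (Nat.findGreatest P (m' - 1)) :=
          Nat.findGreatest_spec hm₁le ⟨le_rfl, hm₁c⟩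
        set k := Nat.findGreatest P (m' - 1) with hk
        have hkle : k ≤ m' - 1 := Nat.findGreatest_le _
        have hno : ∀ i, k < i → i < m' → p (y (i + 1)) ≠ y i := by
          intro i hi hi' hci
          exact absurd ⟨by omega, hci⟩ (Nat.findGreatest_is_greatest hi (by omega))
        have hpm' : p (y m') = y k :=
          chain_eq hb (by omega) hPg.2 (by omega) hno
        obtain ⟨hσk, hrhk, hdk, hdhk⟩ := ih k (by omega) hPg.1 hPg.2
        have hrlt : rank (y k) < rank (y m') := by
          have h2 := (ha m' (by omega)).2
          rw [hpm'] at h2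
          exact h2
        have hσlt : σ < rank (y m') := by omega
        obtain ⟨j', hj', hmem'⟩ := haW m' (by omega)
        have hr' : rank (y m') = j' := hrank j' hj' _ (hsub j' hmem')
        have hj'N : N < j' := by omega
        obtain ⟨hW', hpeq'⟩ := hN j' hj'N _ hmem'
        have hrh' : rank (h * y m') = j' := hrank j' hj' _ hW'
        have hph : p (h * y m') = h * y k := by rw [hpeq', hpm']
        refine ⟨by omega, by rw [hrh', hr'], ?_, ?_⟩
        · rw [df_of_lt hdec hσlt, hpm', hdk]
        · rw [df_of_lt hdec (by rw [hrh', ← hr']; exact hσlt), hph, hdhk]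
  -- conclude
  obtain ⟨ne, hKe'⟩ := hKe σ
  obtain ⟨nh, hKh'⟩ := hKh σ
  obtain ⟨m', hm'ge, hm'c⟩ := hinf (max (max ne nh) (m₁ + 1))
  have hm₁m' : m₁ < m' := by omega
  have hσlt : σ < rank (y m') :=
    rank_lt_of_case2 ha hb m' m₁ hm₁T hm₁m' hm₁c hm'c
  obtain ⟨hσle, hrh, hde, hdh⟩ := D m' (by omega) hm'c
  have h1e : v σ = y m₁ := by rw [← hde]; exact (hKe' m' (by omega) hσlt).symm
  have h1h : v σ = h * y m₁ := by
    rw [← hdh]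
    exact (hKh' m' (by omega) (by rw [hrh]; exact hσlt)).symm
  exact hne (right_eq_mul.mp (h1e.symm.trans h1h))

include hsub hrank in
lemma endgameNR {h : G} (hne : h ≠ 1) {N : ℕ}
    (hN : ∀ i, N < i → ∀ w ∈ W' i, h * w ∈ W i ∧ p (h * w) = h * p w)
    (y : ℕ → G) (c : G) (T : ℕ)
    (haW : ∀ m, T ≤ m → ∃ j, 1 ≤ j ∧ y m ∈ W' j)
    (hpe : ∀ m, T ≤ m → p (y m) = c)
    (hph : ∀ m, T ≤ m → p (h * y m) = c)
    (hub : ∀ C, ∃ m, C < rank (y m)) : False := by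
  classical
  obtain ⟨m, hm⟩ := hub (max N ((Finset.range T).sup fun m => rank (y m)))
  have hmT : T ≤ m := by
    by_contra hlt
    have : rank (y m) ≤ (Finset.range T).sup fun m => rank (y m) :=
      Finset.le_sup (f := fun m => rank (y m)) (Finset.mem_range.mpr (by omega))
    omega
  obtain ⟨j, hj, hmem⟩ := haW m hmT
  have hr : rank (y m) = j := hrank j hj _ (hsub j hmem)
  have hjN : N < j := by omega
  obtain ⟨hW, hpeq⟩ := hN j hjN _ hmem
  have e1 : p (h * y m) = h * c := by rw [hpeq, hpe m hmT]
  have : h * c = c := by rw [← e1]; exact hph m hmT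
  exact hne (mul_eq_right.mp this)

end Endgame

/-! ### Measurability helpers -/

section Meas

lemma measurable_of_fibers [Countable G] {m : MeasurableSpace Ω} {f : Ω → G}
    (h : ∀ g : G, MeasurableSet[m] {ω | f ω = g}) :
    @Measurable Ω G m ⊤ f := by
  intro s _
  have : f ⁻¹' s = ⋃ g ∈ s, {ω | f ω = g} := by
    ext ω
    simp only [Set.mem_preimage, Set.mem_iUnion, Set.mem_setOf_eq]
    exact ⟨fun hs => ⟨f ω, hs, rfl⟩, fun ⟨g, hg, he⟩ => he ▸ hg⟩
  rw [this]
  exact MeasurableSet.biUnion (Set.to_countable s) (fun g _ => h g)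

lemma fiber_measurable {m : MeasurableSpace Ω} {f : Ω → G}
    (h : @Measurable Ω G m ⊤ f) (s : Set G) : MeasurableSet[m] {ω | f ω ∈ s} :=
  h (by trivial : MeasurableSet[⊤] s)

lemma measurable_mul_comp [Countable G] [Group G] {m : MeasurableSpace Ω} {f g : Ω → G}
    (hf : @Measurable Ω G m ⊤ f) (hg : @Measurable Ω G m ⊤ g) :
    @Measurable Ω G m ⊤ (fun ω => f ω * g ω) := by
  apply measurable_of_fibers
  intro c
  have : {ω | f ω * g ω = c} = ⋃ a : G, ({ω | f ω = a} ∩ {ω | g ω = a⁻¹ * c}) := by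
    ext ω
    simp only [Set.mem_setOf_eq, Set.mem_iUnion, Set.mem_inter_iff]
    constructor
    · intro h; exact ⟨f ω, rfl, by rw [← h]; group⟩
    · rintro ⟨a, ha, hb⟩; rw [ha, hb]; group
  rw [this]
  exact MeasurableSet.iUnion fun a =>
    (fiber_measurable hf {a}).inter (fiber_measurable hg {a⁻¹ * c})

lemma measurable_pair_rel [Countable G] {m : MeasurableSpace Ω} {f g : Ω → G}
    (hf : @Measurable Ω G m ⊤ f) (hg : @Measurable Ω G m ⊤ g) (r : G → G → Prop) :
    MeasurableSet[m] {ω | r (f ω) (g ω)} := by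
  have : {ω | r (f ω) (g ω)} = ⋃ a : G, ({ω | g ω = a} ∩ {ω | r (f ω) a}) := by
    ext ω
    simp only [Set.mem_setOf_eq, Set.mem_iUnion, Set.mem_inter_iff]
    exact ⟨fun h => ⟨g ω, rfl, h⟩, fun ⟨a, ha, hr⟩ => by rw [ha]; exact hr⟩
  rw [this]
  exact MeasurableSet.iUnion fun a =>
    (fiber_measurable hg {a}).inter (fiber_measurable hf {b | r b a})

lemma measurable_listProd [Countable G] [Group G] {m : MeasurableSpace Ω} (f : ℕ → Ω → G)
    (hf : ∀ i, @Measurable Ω G m ⊤ (f i)) (n : ℕ) :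
    @Measurable Ω G m ⊤ (fun ω => ((List.range n).map (fun i => f i ω)).prod) := by
  induction n with
  | zero => simpa using @measurable_const G Ω ⊤ m 1
  | succ n ih =>
      have : (fun ω => ((List.range (n + 1)).map (fun i => f i ω)).prod)
          = fun ω => ((List.range n).map (fun i => f i ω)).prod * f n ω := by
        funext ω
        rw [List.range_succ, List.map_append, List.prod_append]
        simp
      rw [this]
      exact measurable_mul_comp ih (hf n)

lemma meas_exists_forall {m : MeasurableSpace Ω} (A : ℕ → Set Ω)
    (hA : ∀ k, MeasurableSet[m] (A k)) :
    MeasurableSet[m] {ω | ∃ n, ∀ k, n ≤ k → ω ∈ A k} := by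
  have : {ω | ∃ n, ∀ k, n ≤ k → ω ∈ A k} = ⋃ n, ⋂ k, ⋂ _ : n ≤ k, A k := by
    ext ω; simp [Set.mem_iUnion, Set.mem_iInter]
  rw [this]
  exact MeasurableSet.iUnion fun n => MeasurableSet.iInter fun k =>
    MeasurableSet.iInter fun _ => hA k

lemma meas_forall_exists {m : MeasurableSpace Ω} (A : ℕ → Set Ω)
    (hA : ∀ k, MeasurableSet[m] (A k)) :
    MeasurableSet[m] {ω | ∀ n, ∃ k, n ≤ k ∧ ω ∈ A k} := by
  have : {ω | ∀ n, ∃ k, n ≤ k ∧ ω ∈ A k} = ⋂ n, ⋃ k, ⋃ _ : n ≤ k, A k := by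
    ext ω; simp [Set.mem_iUnion, Set.mem_iInter]
  rw [this]
  exact MeasurableSet.iInter fun n => MeasurableSet.iUnion fun k =>
    MeasurableSet.iUnion fun _ => hA k

end Meas

/-! ### The tail σ-algebra -/

section Tail

variable (Z : ℕ → Ω → G)

/-- the σ-algebra of the walk from time `N` on. -/
abbrev lvl (N : ℕ) : MeasurableSpace Ω :=
  ⨆ m, ⨆ _ : N ≤ m, MeasurableSpace.comap (Z m) ⊤

lemma lvl_meas {N m : ℕ} (h : N ≤ m) (s : Set G) :
    MeasurableSet[lvl Z N] {ω | Z m ω ∈ s} := by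
  have hle : MeasurableSpace.comap (Z m) ⊤ ≤ lvl Z N :=
    le_iSup₂ (f := fun m (_ : N ≤ m) => MeasurableSpace.comap (Z m) (⊤ : MeasurableSpace G)) m h
  exact hle _ (MeasurableSpace.measurableSet_comap.mpr ⟨s, trivial, rfl⟩)

lemma lvl_pair_meas [Countable G] {N m m' : ℕ} (h : N ≤ m) (h' : N ≤ m') (r : G → G → Prop) :
    MeasurableSet[lvl Z N] {ω | r (Z m' ω) (Z m ω)} := by
  have : {ω | r (Z m' ω) (Z m ω)}
      = ⋃ a : G, ({ω | Z m ω ∈ ({a} : Set G)} ∩ {ω | Z m' ω ∈ {b | r b a}}) := by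
    ext ω
    simp only [Set.mem_setOf_eq, Set.mem_iUnion, Set.mem_inter_iff, Set.mem_singleton_iff]
    exact ⟨fun hr => ⟨Z m ω, rfl, hr⟩, fun ⟨a, ha, hr⟩ => by rw [ha]; exact hr⟩
  rw [this]
  exact MeasurableSet.iUnion fun a => (lvl_meas Z h _).inter (lvl_meas Z h' _)

lemma tail_eventually (A : ℕ → Set Ω) (hA : ∀ N m, N ≤ m → MeasurableSet[lvl Z N] (A m)) :
    MeasurableSet[⨅ n : ℕ, lvl Z n] {ω | ∃ n, ∀ m, n ≤ m → ω ∈ A m} := by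
  rw [MeasurableSpace.measurableSet_iInf]
  intro N
  have : {ω | ∃ n, ∀ m, n ≤ m → ω ∈ A m} = ⋃ n, ⋂ m, ⋂ _ : max n N ≤ m, A m := by
    ext ω
    simp only [Set.mem_setOf_eq, Set.mem_iUnion, Set.mem_iInter]
    constructor
    · rintro ⟨n, hn⟩
      exact ⟨n, fun m hm => hn m (le_trans (le_max_left _ _) hm)⟩
    · rintro ⟨n, hn⟩
      exact ⟨max n N, fun m hm => hn m hm⟩
  rw [this]
  exact MeasurableSet.iUnion fun n => MeasurableSet.iInter fun m =>
    MeasurableSet.iInter fun hm => hA N m (le_trans (le_max_right _ _) hm)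

lemma tail_frequently (A : ℕ → Set Ω) (hA : ∀ N m, N ≤ m → MeasurableSet[lvl Z N] (A m)) :
    MeasurableSet[⨅ n : ℕ, lvl Z n] {ω | ∀ n, ∃ m, n ≤ m ∧ ω ∈ A m} := by
  rw [MeasurableSpace.measurableSet_iInf]
  intro N
  have : {ω | ∀ n, ∃ m, n ≤ m ∧ ω ∈ A m} = ⋂ n, ⋃ m, ⋃ _ : max n N ≤ m, A m := by
    ext ω
    simp only [Set.mem_setOf_eq, Set.mem_iUnion, Set.mem_iInter]
    constructor
    · rintro hn n
      obtain ⟨m, hm, hmem⟩ := hn (max n N)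
      exact ⟨m, hm, hmem⟩
    · rintro hn n
      obtain ⟨m, hm, hmem⟩ := hn n
      exact ⟨m, le_trans (le_max_left _ _) hm, hmem⟩
  rw [this]
  exact MeasurableSet.iInter fun n => MeasurableSet.iUnion fun m =>
    MeasurableSet.iUnion fun hm => hA N m (le_trans (le_max_right _ _) hm)

/-- the σ-algebra generated by the steps from time `1` on. -/
def stepAlg (X : ℕ → Ω → G) : MeasurableSpace Ω :=
  ⨆ i ∈ {i : ℕ | 1 ≤ i}, MeasurableSpace.comap (X i) ⊤

lemma stepAlg_le {X : ℕ → Ω → G} {m0 : MeasurableSpace Ω}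
    (hX : ∀ i, @Measurable Ω G m0 ⊤ (X i)) : stepAlg X ≤ m0 :=
  iSup₂_le fun i _ => measurable_iff_comap_le.mp (hX i)

lemma measurable_stepAlg {X : ℕ → Ω → G} {i : ℕ} (hi : 1 ≤ i) :
    @Measurable Ω G (stepAlg X) ⊤ (X i) :=
  measurable_iff_comap_le.mpr
    (le_iSup₂ (f := fun i (_ : i ∈ {i : ℕ | 1 ≤ i}) => MeasurableSpace.comap (X i)
      (⊤ : MeasurableSpace G)) i hi)

lemma tail_le {m0 : MeasurableSpace Ω} (hZ : ∀ m, @Measurable Ω G m0 ⊤ (Z m)) :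
    (⨅ n : ℕ, lvl Z n) ≤ m0 := by
  refine le_trans (iInf_le _ 0) ?_
  exact iSup₂_le fun m _ => measurable_iff_comap_le.mp (hZ m)

end Tail

end TailAux

open TailAux

/-- Abstract non-triviality criterion for the tail σ-algebra of a random walk.
`(X_n)` is an i.i.d. sequence with (fully supported) law `ν` on a countable group `G`,
and `Z_n = X_0 ⋯ X_{n-1}` is the associated random walk.  Given disjoint sets `W_i`,
subsets `W'_i ⊆ W_i`, the associated rank function, and a map `p` defined on `⋃ W_i`
satisfying hypotheses (1)–(5), the tail σ-algebra `⋂ₙ σ(Z_m : m ≥ n)` is nontrivial: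
some tail-measurable event has probability strictly between `0` and `1`. -/
theorem tail_nontrivial_of_ranked_structure
    {G : Type*} [Group G] [Countable G]
    {Ω : Type*} [MeasurableSpace Ω] (μ : Measure Ω) [IsProbabilityMeasure μ]
    -- the step distribution: a probability measure of full support on `G`
    (ν : G → ENNReal) (hfull : ∀ g, 0 < ν g) (hν : ∑' g : G, ν g = 1)
    -- the i.i.d. steps and the random walk
    (X : ℕ → Ω → G)
    (hXmeas : ∀ i (g : G), MeasurableSet {ω | X i ω = g})
    (hindep : iIndepFun (m := fun _ => (⊤ : MeasurableSpace G)) X μ)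
    (hdist : ∀ i (g : G), μ {ω | X i ω = g} = ν g)
    (Z : ℕ → Ω → G)
    (hZ : ∀ n ω, Z n ω = ((List.range n).map (fun i => X i ω)).prod)
    -- the combinatorial data
    (W W' : ℕ → Set G)
    (hsub : ∀ i, W' i ⊆ W i)
    (hdisj : ∀ i j, i ≠ j → Disjoint (W i) (W j))
    (rank : G → ℕ)
    (hrank : ∀ i, 1 ≤ i → ∀ g ∈ W i, rank g = i)
    (hrank0 : ∀ g : G, (∀ i, 1 ≤ i → g ∉ W i) → rank g = 0)
    (p : G → G)
    -- (1) `p` decreases rank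
    (h1 : ∀ i, 1 ≤ i → ∀ g ∈ W i, rank (p g) < rank g)
    -- (2) eventual equivariance
    (h2 : ∀ h : G, ∃ N : ℕ, ∀ i, N < i → ∀ w ∈ W' i, h * w ∈ W i ∧ p (h * w) = h * p w)
    -- (3) the walk eventually lies in `⋃ W'_j`
    (h3 : ∀ᵐ ω ∂μ, ∃ i₀ : ℕ, ∀ i, i₀ < i → ∃ j, 1 ≤ j ∧ Z i ω ∈ W' j)
    -- (4) eventually `p(Z_{i+1}) = p(Z_i)` or `p(Z_{i+1}) = Z_i`
    (h4 : ∀ᵐ ω ∂μ, ∃ i₀ : ℕ, ∀ i, i₀ < i →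
      p (Z (i + 1) ω) = p (Z i ω) ∨ p (Z (i + 1) ω) = Z i ω)
    -- (5) the rank of the walk is unbounded
    (h5 : ∀ᵐ ω ∂μ, ∀ C : ℕ, ∃ n, C < rank (Z n ω)) :
    ∃ E : Set Ω,
      MeasurableSet[⨅ n : ℕ, ⨆ m : ℕ, ⨆ _ : n ≤ m,
        MeasurableSpace.comap (Z m) (⊤ : MeasurableSpace G)] E ∧
      0 < μ E ∧ μ E < 1 := by
  classical
  by_contra hcon
  push_neg at hcon
  -- tail triviality
  have H : ∀ E : Set Ω, MeasurableSet[⨅ n : ℕ, lvl Z n] E → μ E = 0 ∨ μ E = 1 := by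
    intro E hE
    rcases eq_or_ne (μ E) 0 with h0 | h0
    · exact Or.inl h0
    · refine Or.inr ?_
      have hle : μ E ≤ 1 := prob_le_one
      rcases eq_or_lt_of_le hle with heq | hlt
      · exact heq
      · exact absurd (hcon E hE (pos_iff_ne_zero.mpr h0)) (not_le.mpr hlt)
  -- basic measurability facts
  have hXm : ∀ i, @Measurable Ω G _ ⊤ (X i) :=
    fun i => measurable_of_fibers (fun g => hXmeas i g)
  have hZm : ∀ m, @Measurable Ω G _ ⊤ (Z m) := by
    intro m
    have : Z m = fun ω => ((List.range m).map (fun i => X i ω)).prod :=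
      funext fun ω => hZ m ω
    rw [this]
    exact measurable_listProd _ hXm m
  have htail_le : (⨅ n : ℕ, lvl Z n) ≤ ‹MeasurableSpace Ω› :=
    tail_le Z hZm
  -- the shifted walk
  set Y : ℕ → Ω → G := fun m ω => ((List.range m).map (fun i => X (i + 1) ω)).prod with hY
  have hZY : ∀ m ω, Z (m + 1) ω = X 0 ω * Y m ω := by
    intro m ω
    rw [hZ (m + 1) ω, List.range_succ_eq_map, List.map_cons, List.prod_cons, List.map_map]
    rfl
  -- the σ-algebra generated by the later steps
  have hM'le : stepAlg X ≤ ‹MeasurableSpace Ω› := stepAlg_le hXm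
  have hYm : ∀ m, @Measurable Ω G (stepAlg X) ⊤ (Y m) := by
    intro m
    apply measurable_listProd
    intro i
    exact measurable_stepAlg (by omega)
  -- independence of the first step from the rest
  have hI : Indep (⨆ i ∈ ({0} : Set ℕ), MeasurableSpace.comap (X i) ⊤) (stepAlg X) μ := by
    rw [stepAlg]
    refine indep_iSup_of_disjoint (fun i => measurable_iff_comap_le.mp (hXm i))
      hindep.iIndep ?_
    rw [Set.disjoint_left]
    intro a ha ha'
    simp only [Set.mem_singleton_iff] at ha
    simp only [Set.mem_setOf_eq] at ha'
    omega
  have hX0mem : ∀ h : G, MeasurableSet[⨆ i ∈ ({0} : Set ℕ), MeasurableSpace.comap (X i) ⊤]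
      {ω | X 0 ω = h} := by
    intro h
    have hle : MeasurableSpace.comap (X 0) ⊤
        ≤ ⨆ i ∈ ({0} : Set ℕ), MeasurableSpace.comap (X i) ⊤ :=
      le_iSup₂ (f := fun i (_ : i ∈ ({0} : Set ℕ)) => MeasurableSpace.comap (X i)
        (⊤ : MeasurableSpace G)) 0 rfl
    refine hle _ (MeasurableSpace.measurableSet_comap.mpr ⟨{h}, trivial, ?_⟩)
    ext ω; simp
  -- the key transfer principle
  have transfer : ∀ (P Q : Ω → Prop) (h : G), (∀ᵐ ω ∂μ, P ω) →
      MeasurableSet[stepAlg X] {ω | Q ω} → (∀ ω, P ω → X 0 ω = h → Q ω) → ∀ᵐ ω ∂μ, Q ω := by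
    intro P Q h hP hQm himp
    have hsub' : {ω | X 0 ω = h} ∩ {ω | Q ω}ᶜ ⊆ {ω | ¬ P ω} := by
      rintro ω ⟨hω1, hω2⟩ hp
      exact hω2 (himp ω hp hω1)
    have h0 : μ ({ω | X 0 ω = h} ∩ {ω | Q ω}ᶜ) = 0 :=
      measure_mono_null hsub' (ae_iff.mp hP)
    have hmul : μ {ω | X 0 ω = h} * μ ({ω | Q ω}ᶜ) = 0 := by
      rw [← (Indep_iff _ _ _).mp hI _ _ (hX0mem h) hQm.compl]
      exact h0
    have hni : μ {ω | X 0 ω = h} ≠ 0 := by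
      rw [hdist 0 h]
      exact (hfull h).ne'
    have hc0 : μ ({ω | Q ω}ᶜ) = 0 := by
      rcases mul_eq_zero.mp hmul with h' | h'
      · exact absurd h' hni
      · exact h'
    rw [ae_iff]
    exact hc0
  -- derived rank-decrease fact
  have hdec : ∀ g : G, 1 ≤ rank g → rank (p g) < rank g := by
    intro g hg
    by_cases hW : ∃ i, 1 ≤ i ∧ g ∈ W i
    · obtain ⟨i, hi, hmem⟩ := hW
      exact h1 i hi g hmem
    · push_neg at hW
      have := hrank0 g hW
      omega
  -- a helper converting membership facts into the `ha` hypotheses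
  have mk_ha : ∀ (y : ℕ → G) (T : ℕ), (∀ m, T ≤ m → ∃ j, 1 ≤ j ∧ y m ∈ W' j) →
      ∀ m, T ≤ m → 1 ≤ rank (y m) ∧ rank (p (y m)) < rank (y m) := by
    intro y T haW m hm
    obtain ⟨j, hj, hmem⟩ := haW m hm
    have hr : rank (y m) = j := hrank j hj _ (hsub j hmem)
    constructor
    · omega
    · rw [hr]
      have := h1 j hj _ (hsub j hmem)
      rw [hr] at this
      exact this
  -- nontriviality of G
  have hGnt : ∃ h : G, h ≠ 1 := by
    by_contra hno
    push_neg at hno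
    obtain ⟨ω₀, hω₀⟩ := h5.exists
    obtain ⟨n, hn⟩ := hω₀ (rank (1 : G))
    rw [hno (Z n ω₀)] at hn
    omega
  obtain ⟨h, hne⟩ := hGnt
  obtain ⟨N, hN⟩ := h2 h
  -- helper: measurable sets are a.e. iff measure one
  have aeOf : ∀ (S : Set Ω), MeasurableSet S → μ S = 1 → ∀ᵐ ω ∂μ, ω ∈ S := by
    intro S hm hS1
    have h' : S ∈ ae μ := (mem_ae_iff_prob_eq_one (μ := μ) hm).mpr hS1
    exact Filter.mem_of_superset h' (fun x hx => hx)
  have oneOf : ∀ (S : Set Ω), MeasurableSet S → (∀ᵐ ω ∂μ, ω ∈ S) → μ S = 1 := by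
    intro S hm hae
    have h' : S ∈ ae μ := Filter.mem_of_superset hae (fun x hx => hx)
    exact (mem_ae_iff_prob_eq_one (μ := μ) hm).mp h'
  -- the recurrence event R : infinitely many case-2 times
  set R : Set Ω := {ω | ∀ n, ∃ m, n ≤ m ∧ ω ∈ {ω | p (Z (m + 1) ω) = Z m ω}} with hRdef
  have hRtail : MeasurableSet[⨅ n : ℕ, lvl Z n] R :=
    tail_frequently Z _ (fun N' m hm =>
      lvl_pair_meas Z hm (by omega) (fun b a => p b = a))
  have hRmeas : MeasurableSet R := htail_le _ hRtail
  rcases H R hRtail with hR0 | hR1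
  · -- Case: finitely many case-2 times a.s.
    -- select the limit value of p(Z_m)
    set F : G → Set Ω := fun c => {ω | ∃ n, ∀ m, n ≤ m → ω ∈ {ω | Z m ω ∈ {g | p g = c}}}
      with hFdef
    have hFtail : ∀ c, MeasurableSet[⨅ n : ℕ, lvl Z n] (F c) :=
      fun c => tail_eventually Z _ (fun N' m hm => lvl_meas Z hm _)
    have hFmeas : ∀ c, MeasurableSet (F c) := fun c => htail_le _ (hFtail c)
    have hRc : ∀ᵐ ω ∂μ, ω ∉ R := by
      rw [ae_iff]
      have he : {ω | ¬ ω ∉ R} = Rᶜᶜ := rfl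
      rw [he, compl_compl]
      exact hR0
    have hFae : ∀ᵐ ω ∂μ, ∃ c, ω ∈ F c := by
      filter_upwards [h4, hRc] with ω hω4 hωR
      simp only [hRdef, Set.mem_setOf_eq, not_forall, not_exists, not_and] at hωR
      obtain ⟨n₀, hn₀⟩ := hωR
      obtain ⟨i₀, hi₀⟩ := hω4
      set T := max n₀ (i₀ + 1) with hT
      have hconst : ∀ m, T ≤ m → p (Z m ω) = p (Z T ω) := by
        intro m hm
        induction m, hm using Nat.le_induction with
        | base => rfl
        | succ n hn ih =>
            rcases hi₀ n (by omega) with h' | h'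
            · rw [h', ih]
            · exact absurd h' (hn₀ n (by omega))
      exact ⟨p (Z T ω), T, fun m hm => hconst m hm⟩
    have hFsel : ∃ c, μ (F c) = 1 := by
      by_contra hnone
      push_neg at hnone
      have hzero : ∀ c, μ (F c) = 0 := by
        intro c
        rcases H (F c) (hFtail c) with h' | h'
        · exact h'
        · exact absurd h' (hnone c)
      have h1' : μ (⋃ c, F c) = 1 := by
        apply oneOf _ (MeasurableSet.iUnion hFmeas)
        filter_upwards [hFae] with ω hω
        obtain ⟨c, hc⟩ := hω
        exact Set.mem_iUnion.mpr ⟨c, hc⟩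
      have hle : μ (⋃ c, F c) ≤ ∑' c : G, μ (F c) := measure_iUnion_le _
      rw [h1'] at hle
      simp only [hzero, tsum_zero] at hle
      exact absurd hle (by norm_num)
    obtain ⟨c₀, hc₀⟩ := hFsel
    -- transfer the a.s. facts to the shifted walk with multipliers `1` and `h`
    have hbundle : ∀ᵐ ω ∂μ, ((∃ i₀ : ℕ, ∀ i, i₀ < i → ∃ j, 1 ≤ j ∧ Z i ω ∈ W' j) ∧
        (∀ C : ℕ, ∃ n, C < rank (Z n ω)) ∧ ω ∈ F c₀) := by
      filter_upwards [h3, h5, aeOf _ (hFmeas c₀) hc₀] with ω hω3 hω5 hωF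
      exact ⟨hω3, hω5, hωF⟩
    have hQ : ∀ g : G, ∀ᵐ ω ∂μ,
        ((∃ T, ∀ m, T ≤ m → ∃ j, 1 ≤ j ∧ g * Y m ω ∈ W' j) ∧
         (∃ T, ∀ m, T ≤ m → p (g * Y m ω) = c₀) ∧
         (∀ C : ℕ, ∃ m, C < rank (g * Y m ω))) := by
      intro g
      refine transfer _ _ g hbundle ?_ ?_
      · -- measurability w.r.t. M'
        have e1 : {ω | (∃ T, ∀ m, T ≤ m → ∃ j, 1 ≤ j ∧ g * Y m ω ∈ W' j) ∧
            (∃ T, ∀ m, T ≤ m → p (g * Y m ω) = c₀) ∧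
            (∀ C : ℕ, ∃ m, C < rank (g * Y m ω))} =
            {ω | ∃ T, ∀ m, T ≤ m → ω ∈ {ω | Y m ω ∈ {x | ∃ j, 1 ≤ j ∧ g * x ∈ W' j}}} ∩
            ({ω | ∃ T, ∀ m, T ≤ m → ω ∈ {ω | Y m ω ∈ {x | p (g * x) = c₀}}} ∩
             ⋂ C : ℕ, ⋃ m : ℕ, {ω | Y m ω ∈ {x | C < rank (g * x)}}) := by
          ext ω
          simp only [Set.mem_setOf_eq, Set.mem_inter_iff, Set.mem_iInter,
            Set.mem_iUnion] <;> tauto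
        rw [e1]
        refine MeasurableSet.inter ?_ (MeasurableSet.inter ?_ ?_)
        · exact meas_exists_forall _ (fun k => fiber_measurable (hYm k) _)
        · exact meas_exists_forall _ (fun k => fiber_measurable (hYm k) _)
        · exact MeasurableSet.iInter fun C => MeasurableSet.iUnion fun m =>
            fiber_measurable (hYm m) _
      · -- pointwise implication on `{X 0 = g}`
        rintro ω ⟨hω3, hω5, hωF⟩ hX0
        have e : ∀ k, g * Y k ω = Z (k + 1) ω := by
          intro k
          rw [hZY k ω, hX0]
        obtain ⟨i₀, hi₀⟩ := hω3
        obtain ⟨n₁, hn₁⟩ := hωF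
        refine ⟨⟨i₀, fun m hm => ?_⟩, ⟨n₁, fun m hm => ?_⟩, fun C => ?_⟩
        · rw [e m]
          exact hi₀ (m + 1) (by omega)
        · rw [e m]
          exact hn₁ (m + 1) (by omega)
        · obtain ⟨n, hn⟩ := hω5 (max C (rank (Z 0 ω)))
          have hn0 : n ≠ 0 := by
            intro h0
            rw [h0] at hn
            omega
          refine ⟨n - 1, ?_⟩
          rw [e (n - 1)]
          have : n - 1 + 1 = n := by omega
          rw [this]
          omega
    have hQall : ∀ᵐ ω ∂μ, ∀ g : G,
        ((∃ T, ∀ m, T ≤ m → ∃ j, 1 ≤ j ∧ g * Y m ω ∈ W' j) ∧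
         (∃ T, ∀ m, T ≤ m → p (g * Y m ω) = c₀) ∧
         (∀ C : ℕ, ∃ m, C < rank (g * Y m ω))) := ae_all_iff.mpr hQ
    obtain ⟨ω', hω'⟩ := hQall.exists
    have hQe := hω' 1
    have hQh := hω' h
    simp only [one_mul] at hQe
    obtain ⟨⟨T₁, hT₁⟩, ⟨T₂, hT₂⟩, hub⟩ := hQe
    obtain ⟨_, ⟨T₃, hT₃⟩, _⟩ := hQh
    exact endgameNR hsub hrank hne hN (fun m => Y m ω') c₀ (max T₁ (max T₂ T₃))
      (fun m hm => hT₁ m (by omega))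
      (fun m hm => hT₂ m (by omega))
      (fun m hm => hT₃ m (by omega))
      hub
  · -- Case: infinitely many case-2 times a.s.
    -- select the stable `df` values
    set K : ℕ → G → Set Ω := fun ρ w =>
      {ω | ∃ n, ∀ m, n ≤ m → ω ∈ {ω | Z m ω ∈ {x | ρ < rank x → df rank p ρ x = w}}}
      with hKdef
    have hKtail : ∀ ρ w, MeasurableSet[⨅ n : ℕ, lvl Z n] (K ρ w) :=
      fun ρ w => tail_eventually Z _ (fun N' m hm => lvl_meas Z hm _)
    have hKmeas : ∀ ρ w, MeasurableSet (K ρ w) := fun ρ w => htail_le _ (hKtail ρ w)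
    have hKae : ∀ ρ : ℕ, ∀ᵐ ω ∂μ, ∃ w, ω ∈ K ρ w := by
      intro ρ
      filter_upwards [h3, h4] with ω hω3 hω4
      obtain ⟨i₀, hi₀⟩ := hω3
      obtain ⟨i₁, hi₁⟩ := hω4
      set T := max (i₀ + 1) (i₁ + 1) with hT
      have haW : ∀ m, T ≤ m → ∃ j, 1 ≤ j ∧ Z m ω ∈ W' j :=
        fun m hm => hi₀ m (by omega)
      have ha := mk_ha (fun m => Z m ω) T haW
      have hb : ∀ m, T ≤ m → p (Z (m + 1) ω) = p (Z m ω) ∨ p (Z (m + 1) ω) = Z m ω :=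
        fun m hm => hi₁ m (by omega)
      obtain ⟨w, n, hw⟩ := df_stabilizes ha hb hdec ρ
      exact ⟨w, n, fun m hm => hw m hm⟩
    have hKsel : ∀ ρ : ℕ, ∃ w, μ (K ρ w) = 1 := by
      intro ρ
      by_contra hnone
      push_neg at hnone
      have hzero : ∀ w, μ (K ρ w) = 0 := by
        intro w
        rcases H (K ρ w) (hKtail ρ w) with h' | h'
        · exact h'
        · exact absurd h' (hnone w)
      have h1' : μ (⋃ w, K ρ w) = 1 := by
        apply oneOf _ (MeasurableSet.iUnion (hKmeas ρ))
        filter_upwards [hKae ρ] with ω hω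
        obtain ⟨w, hw⟩ := hω
        exact Set.mem_iUnion.mpr ⟨w, hw⟩
      have hle : μ (⋃ w, K ρ w) ≤ ∑' w : G, μ (K ρ w) := measure_iUnion_le _
      rw [h1'] at hle
      simp only [hzero, tsum_zero] at hle
      exact absurd hle (by norm_num)
    choose v hv using hKsel
    -- bundle of a.s. facts
    have hbundle : ∀ᵐ ω ∂μ, ((∃ i₀ : ℕ, ∀ i, i₀ < i → ∃ j, 1 ≤ j ∧ Z i ω ∈ W' j) ∧
        (∃ i₀ : ℕ, ∀ i, i₀ < i →
          p (Z (i + 1) ω) = p (Z i ω) ∨ p (Z (i + 1) ω) = Z i ω) ∧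
        ω ∈ R ∧ (∀ ρ : ℕ, ω ∈ K ρ (v ρ))) := by
      have hKv : ∀ᵐ ω ∂μ, ∀ ρ : ℕ, ω ∈ K ρ (v ρ) :=
        ae_all_iff.mpr (fun ρ => aeOf _ (hKmeas ρ (v ρ)) (hv ρ))
      filter_upwards [h3, h4, aeOf R hRmeas hR1, hKv] with ω a b c d
      exact ⟨a, b, c, d⟩
    have hQ : ∀ g : G, ∀ᵐ ω ∂μ,
        ((∃ T, ∀ m, T ≤ m → ∃ j, 1 ≤ j ∧ g * Y m ω ∈ W' j) ∧
         (∃ T, ∀ m, T ≤ m → p (g * Y (m + 1) ω) = p (g * Y m ω) ∨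
            p (g * Y (m + 1) ω) = g * Y m ω) ∧
         (∀ n, ∃ m, n ≤ m ∧ p (g * Y (m + 1) ω) = g * Y m ω) ∧
         (∀ ρ : ℕ, ∃ n, ∀ m, n ≤ m → ρ < rank (g * Y m ω) →
            df rank p ρ (g * Y m ω) = v ρ)) := by
      intro g
      refine transfer _ _ g hbundle ?_ ?_
      · -- measurability w.r.t. M'
        have e1 : {ω | (∃ T, ∀ m, T ≤ m → ∃ j, 1 ≤ j ∧ g * Y m ω ∈ W' j) ∧
            (∃ T, ∀ m, T ≤ m → p (g * Y (m + 1) ω) = p (g * Y m ω) ∨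
               p (g * Y (m + 1) ω) = g * Y m ω) ∧
            (∀ n, ∃ m, n ≤ m ∧ p (g * Y (m + 1) ω) = g * Y m ω) ∧
            (∀ ρ : ℕ, ∃ n, ∀ m, n ≤ m → ρ < rank (g * Y m ω) →
               df rank p ρ (g * Y m ω) = v ρ)} =
            {ω | ∃ T, ∀ m, T ≤ m → ω ∈ {ω | Y m ω ∈ {x | ∃ j, 1 ≤ j ∧ g * x ∈ W' j}}} ∩
            ({ω | ∃ T, ∀ m, T ≤ m → ω ∈ {ω | (fun b a => p (g * b) = p (g * a) ∨
                p (g * b) = g * a) (Y (m + 1) ω) (Y m ω)}} ∩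
             ({ω | ∀ n, ∃ m, n ≤ m ∧ ω ∈ {ω | (fun b a => p (g * b) = g * a)
                (Y (m + 1) ω) (Y m ω)}} ∩
              ⋂ ρ : ℕ, {ω | ∃ n, ∀ m, n ≤ m →
                ω ∈ {ω | Y m ω ∈ {x | ρ < rank (g * x) → df rank p ρ (g * x) = v ρ}}})) := by
          ext ω
          simp only [Set.mem_setOf_eq, Set.mem_inter_iff, Set.mem_iInter] <;> tauto
        rw [e1]
        refine MeasurableSet.inter ?_ (MeasurableSet.inter ?_ (MeasurableSet.inter ?_ ?_))
        · exact meas_exists_forall _ (fun k => fiber_measurable (hYm k) _)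
        · exact meas_exists_forall _
            (fun k => measurable_pair_rel (hYm (k + 1)) (hYm k)
              (fun b a => p (g * b) = p (g * a) ∨ p (g * b) = g * a))
        · exact meas_forall_exists _
            (fun k => measurable_pair_rel (hYm (k + 1)) (hYm k)
              (fun b a => p (g * b) = g * a))
        · exact MeasurableSet.iInter fun ρ =>
            meas_exists_forall _ (fun k => fiber_measurable (hYm k) _)
      · -- pointwise implication on `{X 0 = g}`
        rintro ω ⟨hω3, hω4, hωR, hωK⟩ hX0
        have e : ∀ k, g * Y k ω = Z (k + 1) ω := by
          intro k
          rw [hZY k ω, hX0]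
        obtain ⟨i₀, hi₀⟩ := hω3
        obtain ⟨i₁, hi₁⟩ := hω4
        refine ⟨⟨i₀, fun m hm => ?_⟩, ⟨i₁, fun m hm => ?_⟩, fun n => ?_, fun ρ => ?_⟩
        · rw [e m]
          exact hi₀ (m + 1) (by omega)
        · rw [e (m + 1), e m]
          exact hi₁ (m + 1) (by omega)
        · obtain ⟨m, hm, hmc⟩ := hωR (n + 1)
          refine ⟨m - 1, by omega, ?_⟩
          have hm1 : m - 1 + 1 = m := by omega
          rw [e (m - 1 + 1), e (m - 1), hm1]
          exact hmc
        · obtain ⟨n, hn⟩ := hωK ρ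
          refine ⟨n, fun m hm => ?_⟩
          rw [e m]
          exact hn (m + 1) (by omega)
    have hQall : ∀ᵐ ω ∂μ, ∀ g : G,
        ((∃ T, ∀ m, T ≤ m → ∃ j, 1 ≤ j ∧ g * Y m ω ∈ W' j) ∧
         (∃ T, ∀ m, T ≤ m → p (g * Y (m + 1) ω) = p (g * Y m ω) ∨
            p (g * Y (m + 1) ω) = g * Y m ω) ∧
         (∀ n, ∃ m, n ≤ m ∧ p (g * Y (m + 1) ω) = g * Y m ω) ∧
         (∀ ρ : ℕ, ∃ n, ∀ m, n ≤ m → ρ < rank (g * Y m ω) →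
            df rank p ρ (g * Y m ω) = v ρ)) := ae_all_iff.mpr hQ
    obtain ⟨ω', hω'⟩ := hQall.exists
    have hQe := hω' 1
    have hQh := hω' h
    simp only [one_mul] at hQe
    obtain ⟨⟨T₁, hT₁⟩, ⟨T₂, hT₂⟩, hinf, hKe⟩ := hQe
    obtain ⟨_, _, _, hKh⟩ := hQh
    exact endgameR hsub hrank h1 hdec hne hN (fun m => Y m ω') v (max T₁ T₂)
      (fun m hm => hT₁ m (by omega))
      (fun m hm => hT₂ m (by omega))
      hinf hKe hKh
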